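/- Let c₀ = ∫_{-∞}^{∞} (1+t²)^{-5/4} dt, let G(x) = ∫₀ˣ (1+t²)^{-5/4} dt with inverse G⁻¹ : (−c₀/2, c₀/2) → ℝ, and define U₀'(x) = G⁻¹(c₀/2 − c₀ x) for x ∈ (0, 1/2]. Then the arclength of the graph of U₀ over [0,1/2] satisfies ∫₀^{1/2} √(1 + U₀'(x)²) dx = (1/(2c₀)) ∫_{-∞}^{∞} (1+t²)^{-3/4} dt. -/

import Mathlib

open Real MeasureTheory Set Filter Topology

/-- `G x = ∫₀ˣ (1+t²)^{-5/4} dt`. -/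
noncomputable def G (x : ℝ) : ℝ := ∫ t in (0:ℝ)..x, (1 + t ^ 2) ^ (-(5:ℝ)/4)

/-- `c₀ = ∫_ℝ (1+t²)^{-5/4} dt`. -/
noncomputable def c₀ : ℝ := ∫ t : ℝ, (1 + t ^ 2) ^ (-(5:ℝ)/4)

/-- The inverse of `G` (a strictly increasing bijection of `ℝ` onto `(-c₀/2, c₀/2)`). -/
noncomputable def Ginv : ℝ → ℝ := Function.invFun G

noncomputable def f5 (t : ℝ) : ℝ := (1 + t ^ 2) ^ (-(5:ℝ)/4)

lemma f5_pos (t : ℝ) : 0 < f5 t := Real.rpow_pos_of_pos (by positivity) _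

lemma cont_f5 : Continuous f5 :=
  (continuous_const.add (continuous_pow 2)).rpow_const (fun t => Or.inl (ne_of_gt (by show (0:ℝ) < 1 + t ^ 2; positivity)))

lemma int_f5 : Integrable f5 := by
  have h := integrable_rpow_neg_one_add_norm_sq (E := ℝ) (μ := volume) (r := 5/2)
    (by simp; norm_num)
  have : (fun x : ℝ => ((1:ℝ) + ‖x‖ ^ 2) ^ (-(5/2:ℝ) / 2)) = f5 := by
    funext x
    simp [f5, Real.norm_eq_abs, sq_abs]
    norm_num
  rwa [this] at h

lemma hG (x : ℝ) : HasDerivAt G (f5 x) x :=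
  intervalIntegral.integral_hasDerivAt_right (cont_f5.intervalIntegrable _ _)
    (cont_f5.stronglyMeasurableAtFilter _ _) cont_f5.continuousAt

lemma hGmono : StrictMono G := strictMono_of_hasDerivAt_pos hG f5_pos

lemma hG0 : G 0 = 0 := intervalIntegral.integral_same

lemma c0_eq : c₀ = 2 * ∫ x in Ioi (0:ℝ), f5 x := by
  have h : c₀ = ∫ t : ℝ, f5 |t| := by
    unfold c₀ f5; congr 1; funext t; rw [sq_abs]
  rw [h, integral_comp_abs]

lemma c0_pos : 0 < c₀ := by
  rw [c0_eq]
  have : 0 < ∫ x in Ioi (0:ℝ), f5 x := by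
    apply setIntegral_pos_iff_support_of_nonneg_ae (by filter_upwards with x using (f5_pos x).le)
      int_f5.integrableOn |>.2
    have : (Function.support f5) ∩ Ioi 0 = Ioi 0 := by
      rw [inter_eq_right]; intro x _; exact (f5_pos x).ne'
    rw [this]; simp
  linarith

lemma hGtop : Tendsto G atTop (𝓝 (c₀ / 2)) := by
  have h := intervalIntegral_tendsto_integral_Ioi (μ := volume) 0 int_f5.integrableOn tendsto_id
  have : c₀ / 2 = ∫ x in Ioi (0:ℝ), f5 x := by rw [c0_eq]; ring
  rw [this]; exact h

lemma hGlt (u : ℝ) : G u < c₀ / 2 :=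
  lt_of_lt_of_le (hGmono (lt_add_one u)) (hGmono.monotone.ge_of_tendsto hGtop (u + 1))

lemma hGim : Ioo 0 (c₀/2) ⊆ G '' Ioi 0 := by
  refine isPreconnected_Ioi.intermediate_value_Ioo (l₁ := 𝓝[>] (0:ℝ)) (l₂ := atTop)
    inf_le_right (le_principal_iff.2 (Ioi_mem_atTop 0))
    (fun x _ => (hG x).continuousAt.continuousWithinAt) ?_ hGtop
  have := ((hG 0).continuousAt.tendsto).mono_left (nhdsWithin_le_nhds (s := Ioi (0:ℝ)))
  rwa [hG0] at this

/-- The arclength of the singular limit graph `U₀`, whose derivative is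
`U₀'(x) = G⁻¹(c₀/2 − c₀ x)` on `(0,1/2]`:
`∫₀^{1/2} √(1 + U₀'(x)²) dx = (1/(2c₀)) ∫_ℝ (1+t²)^{-3/4} dt`. -/
theorem stmt_17 :
    (∫ x in (0:ℝ)..(1/2), Real.sqrt (1 + Ginv (c₀ / 2 - c₀ * x) ^ 2))
      = (1 / (2 * c₀)) * ∫ t : ℝ, (1 + t ^ 2) ^ (-(3:ℝ)/4) := by
  have hc := c0_pos
  set φ : ℝ → ℝ := fun u => (c₀ / 2 - G u) / c₀ with hφdef
  have hφd : ∀ u : ℝ, HasDerivAt φ (-(f5 u) / c₀) u := fun u =>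
    (((hG u).const_sub (c₀ / 2)).div_const c₀)
  have hanti : StrictAnti φ := fun a b hab => by
    have h1 := hGmono hab
    simp only [hφdef]
    gcongr
  have hφim : φ '' Ioi 0 = Ioo 0 (1/2) := by
    ext y
    constructor
    · rintro ⟨u, hu, rfl⟩
      have h1 : 0 < G u := by rw [← hG0]; exact hGmono hu
      have h2 := hGlt u
      constructor
      · exact div_pos (by linarith) hc
      · rw [div_lt_iff₀ hc]; linarith
    · intro hy
      have hmem : c₀ / 2 - c₀ * y ∈ Ioo 0 (c₀/2) := by
        constructor
        · nlinarith [hy.2]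
        · nlinarith [hy.1]
      obtain ⟨u, hu, hGu⟩ := hGim hmem
      refine ⟨u, hu, ?_⟩
      simp only [hφdef, hGu]
      field_simp
      ring
  have hGinvG : ∀ u : ℝ, Ginv (G u) = u := fun u =>
    Function.leftInverse_invFun hGmono.injective u
  have key := integral_image_eq_integral_abs_deriv_smul (s := Ioi (0:ℝ)) (f := φ)
    (f' := fun u => -(f5 u) / c₀) measurableSet_Ioi
    (fun u _ => (hφd u).hasDerivWithinAt) hanti.injective.injOn
    (fun y => Real.sqrt (1 + Ginv (c₀ / 2 - c₀ * y) ^ 2))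
  rw [hφim] at key
  have hLHS : (∫ x in (0:ℝ)..(1/2), Real.sqrt (1 + Ginv (c₀ / 2 - c₀ * x) ^ 2))
      = ∫ x in Ioo (0:ℝ) (1/2), Real.sqrt (1 + Ginv (c₀ / 2 - c₀ * x) ^ 2) := by
    rw [intervalIntegral.integral_of_le (by norm_num), integral_Ioc_eq_integral_Ioo]
  rw [hLHS, key]
  have hint : ∀ u ∈ Ioi (0:ℝ),
      |(-(f5 u) / c₀)| • Real.sqrt (1 + Ginv (c₀ / 2 - c₀ * φ u) ^ 2)
        = (1 / c₀) * (1 + u ^ 2) ^ (-(3:ℝ)/4) := by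
    intro u _
    have harg : c₀ / 2 - c₀ * φ u = G u := by
      simp only [hφdef]; field_simp; ring
    rw [harg, hGinvG u]
    have habs : |(-(f5 u) / c₀)| = f5 u / c₀ := by
      rw [abs_div, abs_neg, abs_of_pos (f5_pos u), abs_of_pos hc]
    rw [habs]
    have hsq : Real.sqrt (1 + u ^ 2) = (1 + u ^ 2) ^ ((1:ℝ)/2) :=
      Real.sqrt_eq_rpow _
    have hpos : (0:ℝ) < 1 + u ^ 2 := by positivity
    rw [smul_eq_mul, hsq, f5]
    rw [div_mul_eq_mul_div, ← Real.rpow_add hpos]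
    rw [show (-(5:ℝ)/4 + 1/2) = -(3:ℝ)/4 by norm_num]
    ring
  rw [setIntegral_congr_fun measurableSet_Ioi hint]
  have hRHS : (∫ t : ℝ, (1 + t ^ 2) ^ (-(3:ℝ)/4))
      = 2 * ∫ t in Ioi (0:ℝ), (1 + t ^ 2) ^ (-(3:ℝ)/4) := by
    rw [← integral_comp_abs (f := fun t : ℝ => (1 + t ^ 2) ^ (-(3:ℝ)/4))]
    congr 1; funext t; rw [sq_abs]
  rw [hRHS, integral_const_mul]
  field_simp
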